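/- Weighted integral identities for the soliton: ∫_ℝ y²·Q(y)^(m+1) dy = ((m+1)/(m+3))·( 2·∫_ℝ y²·Q(y)² dy - ∫_ℝ Q(y)² dy ); ∫_ℝ y²·Q'(y)² dy = (2/(m+3))·∫_ℝ Q(y)² dy + ((m-1)/(m+3))·∫_ℝ y²·Q(y)² dy; and ∫_ℝ y⁴·Q(y)^(m+1) dy = ((m+1)/(m+3))·( 2·∫_ℝ y⁴·Q(y)² dy - 6·∫_ℝ y²·Q(y)² dy ). -/

import Mathlib

open Real MeasureTheory
open Filter

/-- The explicit soliton profile `Q(x) = ((m+1)/(2 cosh²(((m-1)/2) x)))^(1/(m-1))`. -/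
noncomputable def solQ (m : ℝ) (x : ℝ) : ℝ :=
  ((m + 1) / (2 * Real.cosh ((m - 1) / 2 * x) ^ 2)) ^ (1 / (m - 1))

namespace S17

noncomputable def c (m : ℝ) : ℝ := (m - 1) / 2
noncomputable def T (m y : ℝ) : ℝ := Real.sinh (c m * y) / Real.cosh (c m * y)
noncomputable def q (m y : ℝ) : ℝ := solQ m y ^ 2

variable {m : ℝ}

lemma c_pos (hm : 1 < m) : 0 < c m := by unfold c; linarith

lemma solQ_eq (m y : ℝ) : solQ m y = ((m + 1) / (2 * Real.cosh (c m * y) ^ 2)) ^ (1 / (m - 1)) := rfl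

lemma base_pos (hm : 1 < m) (y : ℝ) : 0 < (m + 1) / (2 * Real.cosh (c m * y) ^ 2) := by
  have := Real.cosh_pos (c m * y); positivity

lemma solQ_pos (hm : 1 < m) (y : ℝ) : 0 < solQ m y := by
  rw [solQ_eq]; exact Real.rpow_pos_of_pos (base_pos hm y) _

lemma T_abs_le (m y : ℝ) : |T m y| ≤ 1 := by
  have h1 := Real.cosh_pos (c m * y)
  have h2 := Real.cosh_sq_sub_sinh_sq (c m * y)
  rw [T, abs_div, abs_of_pos h1, div_le_one h1]
  nlinarith [abs_nonneg (Real.sinh (c m * y)), sq_abs (Real.sinh (c m * y))]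

lemma base_le (hm : 1 < m) (y : ℝ) :
    (m + 1) / (2 * Real.cosh (c m * y) ^ 2)
      ≤ 2 * (m + 1) * Real.exp (-(2 * (c m * |y|))) := by
  have hc := c_pos hm
  have habs : |c m * y| = c m * |y| := by rw [abs_mul, abs_of_pos hc]
  have hcosh_ge : Real.exp (c m * |y|) / 2 ≤ Real.cosh (c m * y) := by
    rw [← Real.cosh_abs, Real.cosh_eq, habs]
    have := (Real.exp_pos (-(c m * |y|))).le
    linarith
  have hep := Real.exp_pos (c m * |y|)
  have h1 : (Real.exp (c m * |y|) / 2) ^ 2 ≤ Real.cosh (c m * y) ^ 2 := by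
    apply sq_le_sq' _ hcosh_ge
    have := Real.cosh_pos (c m * y); linarith
  have h2 : (m + 1) / (2 * Real.cosh (c m * y) ^ 2)
      ≤ (m + 1) / (2 * (Real.exp (c m * |y|) / 2) ^ 2) := by
    apply div_le_div_of_nonneg_left (by linarith) (by positivity) (by linarith)
  refine h2.trans (le_of_eq ?_)
  have hsq : Real.exp (c m * |y|) ^ 2 = Real.exp (2 * (c m * |y|)) := by
    rw [two_mul, Real.exp_add]; ring
  rw [Real.exp_neg, ← hsq]
  field_simp

lemma q_bound (hm : 1 < m) (y : ℝ) :
    q m y ≤ (2 * (m + 1)) ^ (2 / (m - 1)) * Real.exp (-(2 * |y|)) := by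
  have hb := base_pos hm y
  have hm1 : (0:ℝ) < m - 1 := by linarith
  have hq : q m y = ((m + 1) / (2 * Real.cosh (c m * y) ^ 2)) ^ (2 / (m - 1)) := by
    rw [q, solQ_eq, ← Real.rpow_natCast (((m + 1) / (2 * Real.cosh (c m * y) ^ 2)) ^ (1 / (m-1))) 2,
      ← Real.rpow_mul hb.le]
    congr 1
    push_cast
    ring
  rw [hq]
  calc ((m + 1) / (2 * Real.cosh (c m * y) ^ 2)) ^ (2 / (m - 1))
      ≤ (2 * (m + 1) * Real.exp (-(2 * (c m * |y|)))) ^ (2 / (m - 1)) :=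
        Real.rpow_le_rpow hb.le (base_le hm y) (by positivity)
    _ = (2 * (m + 1)) ^ (2 / (m - 1)) * Real.exp (-(2 * |y|)) := by
        rw [Real.mul_rpow (by linarith) (Real.exp_pos _).le, ← Real.exp_mul]
        congr 1
        rw [c]; field_simp

lemma continuous_solQ (hm : 1 < m) : Continuous (solQ m) := by
  have : Continuous fun y : ℝ => (m + 1) / (2 * Real.cosh (c m * y) ^ 2) := by
    apply Continuous.div continuous_const (by fun_prop)
    intro y; have := Real.cosh_pos (c m * y); positivity
  have h2 := this.rpow_const (p := 1 / (m - 1)) fun y => Or.inl (base_pos hm y).ne'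
  exact h2.congr fun y => (solQ_eq m y).symm

lemma continuous_T (m : ℝ) : Continuous (T m) := by
  apply Continuous.div (by fun_prop) (by fun_prop)
  intro y; exact (Real.cosh_pos (c m * y)).ne'

lemma continuous_q (hm : 1 < m) : Continuous (q m) := (continuous_solQ hm).pow 2

lemma integrable_base (n : ℕ) :
    Integrable (fun y : ℝ => |y| ^ n * Real.exp (-(2 * |y|))) := by
  have hcont : Continuous fun y : ℝ => |y| ^ n * Real.exp (-(2 * |y|)) := by fun_prop
  apply hcont.locallyIntegrable.integrable_of_isBigO_atTop_of_norm_isNegInvariant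
    (g := fun y : ℝ => Real.exp (-1 * y))
  · exact ae_of_all _ fun y => by simp [abs_neg]
  · rw [Asymptotics.isBigO_iff]
    refine ⟨1, ?_⟩
    filter_upwards [(tendsto_pow_mul_exp_neg_atTop_nhds_zero n).eventually
        (eventually_le_nhds one_pos), eventually_ge_atTop (0 : ℝ)] with y h1 h0
    have hy : |y| = y := abs_of_nonneg h0
    rw [hy]
    have he : Real.exp (-(2 * y)) = Real.exp (-y) * Real.exp (-y) := by
      rw [← Real.exp_add]; ring_nf
    rw [Real.norm_eq_abs, Real.norm_eq_abs, abs_of_nonneg (by positivity), he,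
      abs_of_nonneg (Real.exp_pos _).le, one_mul, ← mul_assoc]
    calc y ^ n * Real.exp (-y) * Real.exp (-y) ≤ 1 * Real.exp (-y) := by
          exact mul_le_mul_of_nonneg_right h1 (Real.exp_pos _).le
      _ = Real.exp (-1 * y) := by rw [one_mul]; ring_nf
  · exact ⟨Set.Ioi 0, Ioi_mem_atTop 0, exp_neg_integrableOn_Ioi 0 one_pos⟩

lemma integrable_mono (hm : 1 < m) (k j : ℕ) :
    Integrable (fun y : ℝ => y ^ k * T m y ^ j * q m y) := by
  apply Integrable.mono' (((integrable_base k).const_mul ((2 * (m + 1)) ^ (2 / (m - 1)))))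
  · exact (((continuous_pow k).mul ((continuous_T m).pow j)).mul (continuous_q hm)).aestronglyMeasurable
  · refine ae_of_all _ fun y => ?_
    have hqpos : 0 < q m y := pow_pos (solQ_pos hm y) 2
    rw [Real.norm_eq_abs, abs_mul, abs_mul, abs_pow, abs_pow, abs_of_pos hqpos]
    calc |y| ^ k * |T m y| ^ j * q m y ≤ |y| ^ k * 1 * q m y := by
          apply mul_le_mul_of_nonneg_right _ hqpos.le
          exact mul_le_mul_of_nonneg_left (pow_le_one₀ (abs_nonneg _) (T_abs_le m y)) (by positivity)
      _ ≤ |y| ^ k * 1 * ((2 * (m + 1)) ^ (2 / (m - 1)) * Real.exp (-(2 * |y|))) := by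
          apply mul_le_mul_of_nonneg_left (q_bound hm y) (by positivity)
      _ = (2 * (m + 1)) ^ (2 / (m - 1)) * (|y| ^ k * Real.exp (-(2 * |y|))) := by ring
lemma hasDerivAt_cm (y : ℝ) : HasDerivAt (fun y : ℝ => c m * y) (c m) y := by
  simpa using (hasDerivAt_id y).const_mul (c m)

lemma hasDerivAt_base (y : ℝ) :
    HasDerivAt (fun y => (m + 1) / (2 * Real.cosh (c m * y) ^ 2))
      (-((m + 1) * (2 * (2 * Real.cosh (c m * y) * (Real.sinh (c m * y) * c m))))
        / (2 * Real.cosh (c m * y) ^ 2) ^ 2) y := by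
  have h2 : HasDerivAt (fun y => Real.cosh (c m * y)) (Real.sinh (c m * y) * c m) y :=
    (Real.hasDerivAt_cosh _).comp y (hasDerivAt_cm y)
  have h3 : HasDerivAt (fun y => 2 * Real.cosh (c m * y) ^ 2)
      (2 * (2 * Real.cosh (c m * y) * (Real.sinh (c m * y) * c m))) y := by
    simpa [mul_comm, mul_assoc, mul_left_comm] using (h2.pow 2).const_mul 2
  have hne : 2 * Real.cosh (c m * y) ^ 2 ≠ 0 := by
    have := Real.cosh_pos (c m * y); positivity
  exact ((hasDerivAt_const y (m + 1)).div h3 hne).congr_deriv (by ring)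

lemma hasDerivAt_solQ (hm : 1 < m) (y : ℝ) :
    HasDerivAt (solQ m) (-(T m y) * solQ m y) y := by
  have hb := base_pos hm y
  have h4 : HasDerivAt (fun x : ℝ => x ^ (1 / (m - 1)))
      (1 / (m - 1) * ((m + 1) / (2 * Real.cosh (c m * y) ^ 2)) ^ (1 / (m - 1) - 1))
      ((m + 1) / (2 * Real.cosh (c m * y) ^ 2)) :=
    Real.hasDerivAt_rpow_const (Or.inl hb.ne')
  have h5 := h4.comp y (hasDerivAt_base (m := m) y)
  have h6 : HasDerivAt (solQ m)
      (1 / (m - 1) * ((m + 1) / (2 * Real.cosh (c m * y) ^ 2)) ^ (1 / (m - 1) - 1) *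
        (-((m + 1) * (2 * (2 * Real.cosh (c m * y) * (Real.sinh (c m * y) * c m))))
          / (2 * Real.cosh (c m * y) ^ 2) ^ 2)) y := h5
  convert h6 using 1
  rw [Real.rpow_sub_one hb.ne']
  rw [← solQ_eq]
  have hcosh := (Real.cosh_pos (c m * y)).ne'
  have hm1 : m - 1 ≠ 0 := by linarith
  have hm2 : m + 1 ≠ 0 := by linarith
  rw [T, c]
  field_simp

lemma hasDerivAt_q (hm : 1 < m) (y : ℝ) :
    HasDerivAt (q m) (-2 * T m y * q m y) y := by
  have h := (hasDerivAt_solQ hm y).pow 2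
  refine h.congr_deriv ?_
  rw [q]
  ring

lemma hasDerivAt_T (m : ℝ) (y : ℝ) :
    HasDerivAt (T m) (c m * (1 - T m y ^ 2)) y := by
  have hS : HasDerivAt (fun y => Real.sinh (c m * y)) (Real.cosh (c m * y) * c m) y :=
    (Real.hasDerivAt_sinh _).comp y (hasDerivAt_cm y)
  have hC : HasDerivAt (fun y => Real.cosh (c m * y)) (Real.sinh (c m * y) * c m) y :=
    (Real.hasDerivAt_cosh _).comp y (hasDerivAt_cm y)
  have hne := (Real.cosh_pos (c m * y)).ne'
  have h := hS.div hC hne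
  refine h.congr_deriv ?_
  have h2 := Real.cosh_sq_sub_sinh_sq (c m * y)
  rw [T]
  field_simp

lemma one_sub_T_sq (m y : ℝ) : 1 - T m y ^ 2 = 1 / Real.cosh (c m * y) ^ 2 := by
  have h1 := (Real.cosh_pos (c m * y)).ne'
  have h2 := Real.cosh_sq_sub_sinh_sq (c m * y)
  rw [T]
  field_simp
  linear_combination h2

lemma relA (hm : 1 < m) (n : ℕ) :
    ((n : ℝ) + 1) * ∫ y : ℝ, y ^ n * q m y = 2 * ∫ y : ℝ, y ^ (n+1) * T m y * q m y := by
  have h1 : Integrable (fun y : ℝ => y ^ n * q m y) := by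
    simpa using integrable_mono hm n 0
  have h2 : Integrable (fun y : ℝ => y ^ (n+1) * T m y * q m y) := by
    simpa using integrable_mono hm (n+1) 1
  have hFi : Integrable (fun y : ℝ => y ^ (n+1) * q m y) := by
    simpa using integrable_mono hm (n+1) 0
  have hF : ∀ y : ℝ, HasDerivAt (fun y : ℝ => y ^ (n+1) * q m y)
      (((n : ℝ) + 1) * (y ^ n * q m y) + (-2) * (y ^ (n+1) * T m y * q m y)) y := by
    intro y
    have h := (hasDerivAt_pow (n+1) y).mul (hasDerivAt_q hm y)
    refine h.congr_deriv ?_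
    push_cast [Nat.add_sub_cancel]
    ring
  have h0 := integral_eq_zero_of_hasDerivAt_of_integrable hF
    ((h1.const_mul _).add (h2.const_mul _)) hFi
  rw [integral_add (h1.const_mul _) (h2.const_mul _), integral_const_mul,
    integral_const_mul] at h0
  linarith

lemma relB (hm : 1 < m) (n : ℕ) :
    ((n : ℝ) + 2) * (∫ y : ℝ, y ^ (n+1) * T m y * q m y)
      + c m * (∫ y : ℝ, y ^ (n+2) * q m y)
      - (c m + 2) * ∫ y : ℝ, y ^ (n+2) * T m y ^ 2 * q m y = 0 := by
  have h1 : Integrable (fun y : ℝ => y ^ (n+1) * T m y * q m y) := by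
    simpa using integrable_mono hm (n+1) 1
  have h2 : Integrable (fun y : ℝ => y ^ (n+2) * q m y) := by
    simpa using integrable_mono hm (n+2) 0
  have h3 : Integrable (fun y : ℝ => y ^ (n+2) * T m y ^ 2 * q m y) :=
    integrable_mono hm (n+2) 2
  have hFi : Integrable (fun y : ℝ => y ^ (n+2) * T m y * q m y) := by
    simpa using integrable_mono hm (n+2) 1
  have hF : ∀ y : ℝ, HasDerivAt (fun y : ℝ => y ^ (n+2) * T m y * q m y)
      (((n : ℝ) + 2) * (y ^ (n+1) * T m y * q m y) + c m * (y ^ (n+2) * q m y)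
        + (-(c m + 2)) * (y ^ (n+2) * T m y ^ 2 * q m y)) y := by
    intro y
    have h := ((hasDerivAt_pow (n+2) y).mul (hasDerivAt_T m y)).mul (hasDerivAt_q hm y)
    refine h.congr_deriv ?_
    push_cast [Nat.add_sub_cancel, Pi.mul_apply]
    ring
  have h12 : Integrable (fun y : ℝ => ((n : ℝ) + 2) * (y ^ (n+1) * T m y * q m y)
      + c m * (y ^ (n+2) * q m y)) := (h1.const_mul _).add (h2.const_mul _)
  have h0 := integral_eq_zero_of_hasDerivAt_of_integrable hF
    (h12.add (h3.const_mul _)) hFi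
  rw [integral_add h12 (h3.const_mul _),
    integral_add (h1.const_mul _) (h2.const_mul _), integral_const_mul,
    integral_const_mul, integral_const_mul] at h0
  linarith

lemma rpow_eq (hm : 1 < m) (y : ℝ) :
    solQ m y ^ (m + 1) = (m + 1) / 2 * (q m y) - (m + 1) / 2 * (T m y ^ 2 * q m y) := by
  have hb := base_pos hm y
  have hQ := solQ_pos hm y
  have hm1 : m - 1 ≠ 0 := ne_of_gt (by linarith)
  have h1 : solQ m y ^ (m + 1) = solQ m y ^ (2 : ℝ) * solQ m y ^ (m - 1) := by
    rw [show m + 1 = 2 + (m - 1) by ring, Real.rpow_add hQ]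
  have h2 : solQ m y ^ (2 : ℝ) = q m y := by
    rw [q, ← Real.rpow_natCast (solQ m y) 2]
    norm_num
  have h3 : solQ m y ^ (m - 1) = (m + 1) / (2 * Real.cosh (c m * y) ^ 2) := by
    rw [solQ_eq, ← Real.rpow_mul hb.le, one_div, inv_mul_cancel₀ hm1, Real.rpow_one]
  rw [h1, h2, h3]
  have h5 := (Real.cosh_pos (c m * y)).ne'
  have h4 : (1 - T m y ^ 2) * Real.cosh (c m * y) ^ 2 = 1 := by
    rw [one_sub_T_sq m y]; field_simp
  field_simp
  linear_combination (-(q m y)) * h4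
end S17

theorem stmt17 (m : ℝ) (hm : 1 < m) :
    (∫ y : ℝ, y ^ 2 * solQ m y ^ (m + 1))
      = ((m + 1) / (m + 3)) *
        (2 * (∫ y : ℝ, y ^ 2 * solQ m y ^ 2) - ∫ y : ℝ, solQ m y ^ 2) ∧
    (∫ y : ℝ, y ^ 2 * deriv (solQ m) y ^ 2)
      = (2 / (m + 3)) * (∫ y : ℝ, solQ m y ^ 2)
        + ((m - 1) / (m + 3)) * ∫ y : ℝ, y ^ 2 * solQ m y ^ 2 ∧
    (∫ y : ℝ, y ^ 4 * solQ m y ^ (m + 1))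
      = ((m + 1) / (m + 3)) *
        (2 * (∫ y : ℝ, y ^ 4 * solQ m y ^ 2) - 6 * ∫ y : ℝ, y ^ 2 * solQ m y ^ 2) := by
  have hm3 : m + 3 ≠ 0 := by linarith
  have hc : S17.c m = (m - 1) / 2 := rfl
  -- relations
  have e1 := S17.relA hm 0
  have e2 := S17.relB hm 0
  have e3 := S17.relA hm 2
  have e4 := S17.relB hm 2
  rw [hc] at e2 e4
  norm_num at e1 e2 e3 e4
  -- e1 : ∫ q = 2 * ∫ y * T * q   (hopefully shapes)
  -- key combined relations
  have hd2 : (m + 3) * (∫ y : ℝ, y ^ 2 * S17.T m y ^ 2 * S17.q m y)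
      = 2 * (∫ y : ℝ, S17.q m y) + (m - 1) * ∫ y : ℝ, y ^ 2 * S17.q m y := by
    linear_combination (-2) * e2 + (-2) * e1
  have hd4 : (m + 3) * (∫ y : ℝ, y ^ 4 * S17.T m y ^ 2 * S17.q m y)
      = 12 * (∫ y : ℝ, y ^ 2 * S17.q m y) + (m - 1) * ∫ y : ℝ, y ^ 4 * S17.q m y := by
    linear_combination (-2) * e4 + (-4) * e3
  have int00 : Integrable (fun y : ℝ => S17.q m y) := by
    simpa using S17.integrable_mono hm 0 0
  have int20 : Integrable (fun y : ℝ => y ^ 2 * S17.q m y) := by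
    simpa using S17.integrable_mono hm 2 0
  have int40 : Integrable (fun y : ℝ => y ^ 4 * S17.q m y) := by
    simpa using S17.integrable_mono hm 4 0
  have int22 := S17.integrable_mono hm 2 2
  have int42 := S17.integrable_mono hm 4 2
  have hder : ∀ y : ℝ, deriv (solQ m) y = -(S17.T m y) * solQ m y :=
    fun y => (S17.hasDerivAt_solQ hm y).deriv
  simp only [show ∀ y : ℝ, solQ m y ^ 2 = S17.q m y from fun _ => rfl]
  refine ⟨?_, ?_, ?_⟩
  · have hrw1 : (fun y : ℝ => y ^ 2 * solQ m y ^ (m + 1))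
        = fun y : ℝ => (m + 1) / 2 * (y ^ 2 * S17.q m y)
            - (m + 1) / 2 * (y ^ 2 * S17.T m y ^ 2 * S17.q m y) := by
      funext y; rw [S17.rpow_eq hm y]; ring
    rw [hrw1, integral_sub (int20.const_mul _) (int22.const_mul _),
      integral_const_mul, integral_const_mul]
    field_simp
    linear_combination (-1 : ℝ) * hd2
  · have hrw2 : (fun y : ℝ => y ^ 2 * deriv (solQ m) y ^ 2)
        = fun y : ℝ => y ^ 2 * S17.T m y ^ 2 * S17.q m y := by
      funext y; rw [hder y, S17.q]; ring
    rw [hrw2]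
    field_simp
    linear_combination hd2
  · have hrw3 : (fun y : ℝ => y ^ 4 * solQ m y ^ (m + 1))
        = fun y : ℝ => (m + 1) / 2 * (y ^ 4 * S17.q m y)
            - (m + 1) / 2 * (y ^ 4 * S17.T m y ^ 2 * S17.q m y) := by
      funext y; rw [S17.rpow_eq hm y]; ring
    rw [hrw3, integral_sub (int40.const_mul _) (int42.const_mul _),
      integral_const_mul, integral_const_mul]
    field_simp
    linear_combination (-1 : ℝ) * hd4
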